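/- arXiv:0901.1409 — 2 statements merged into one kernel-verified Lean document; each statement's English description precedes it below -/
import Mathlib

section
/- Let 𝔫 be a 2-step nilpotent Lie algebra with group N given by BCH multiplication x*y = x + y + (1/2)[x,y]. Let A ⊆ N be a finite symmetric set containing the identity with AA covered by k left translates of A. Then for the set log(A) = A (viewed as a subset of 𝔫), the sumset log(A) + log(A) satisfies |log(A) + log(A)| ≤ k^{L-1}|A| where L is an absolute constant (one may take L = 8): every element a + b with a, b ∈ A can be written as (1/2)·log of an element of A^8. -/
/-- The BCH product on a 2-step nilpotent Lie algebra: `x * y = x + y + (1/2)⁅x, y⁆`. -/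
def bchMul {L : Type*} [LieRing L] [LieAlgebra ℚ L] (x y : L) : L :=
  x + y + (2⁻¹ : ℚ) • ⁅x, y⁆

/-- The `l`-fold product set `A^l` with respect to the BCH product (`A^0 = {0}`,
`0` being the group identity). -/
def bchPow {L : Type*} [LieRing L] [LieAlgebra ℚ L] [DecidableEq L] :
    ℕ → Finset L → Finset L
  | 0, _ => {0}
  | n + 1, A => Finset.image₂ bchMul A (bchPow n A)

section aux
variable {L : Type*} [LieRing L] [LieAlgebra ℚ L]

lemma bch_assoc (h2 : ∀ x y z : L, ⁅x, ⁅y, z⁆⁆ = 0) (a b c : L) : bchMul (bchMul a b) c = bchMul a (bchMul b c) := by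
  have h2' : ∀ x y z : L, ⁅⁅y, z⁆, x⁆ = 0 := by
    intro x y z; rw [← lie_skew, h2, neg_zero]
  simp only [bchMul, lie_add, add_lie, lie_smul, smul_lie, h2, h2', smul_zero]
  module

lemma bch_zero_left (a : L) : bchMul 0 a = a := by
  simp [bchMul]

lemma bch_key (h2 : ∀ x y z : L, ⁅x, ⁅y, z⁆⁆ = 0) (a b : L) : bchMul a (bchMul b (bchMul b a)) = (2 : ℤ) • (a + b) := by
  have h2' : ∀ x y z : L, ⁅⁅y, z⁆, x⁆ = 0 := by
    intro x y z; rw [← lie_skew, h2, neg_zero]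
  have hba : ⁅b, a⁆ = -⁅a, b⁆ := by rw [← lie_skew]
  simp only [bchMul, lie_add, add_lie, lie_smul, smul_lie, h2, h2', smul_zero, lie_self, lie_neg, neg_lie, lie_zero, zero_lie, neg_zero, hba]
  module
end aux

/-- Let 𝔫 be a 2-step nilpotent Lie algebra with BCH group `N`, and `A ⊆ N` a
finite symmetric set containing the identity with `AA` covered by `k` left translates of `A`.
Then `|log A + log A| ≤ k^{L-1}|A|` with `L = 8` (`log` = identity of underlying sets): every
`a + b` with `a, b ∈ A` can be written as `(1/2)·log` of an element of `A^8`,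
i.e. `2•(a+b) ∈ A^8`. -/
theorem stmt8 (L : Type*) [LieRing L] [LieAlgebra ℚ L] [DecidableEq L]
    (h2 : ∀ x y z : L, ⁅x, ⁅y, z⁆⁆ = 0)
    (A : Finset L) (k : ℕ)
    (hsym : ∀ a ∈ A, -a ∈ A) (hone : (0 : L) ∈ A)
    (x : Fin k → L)
    (hcov : ∀ p ∈ Finset.image₂ bchMul A A, ∃ i : Fin k, ∃ a ∈ A, p = bchMul (x i) a) :
    (Finset.image₂ (· + ·) A A).card ≤ k ^ (8 - 1) * A.card ∧
      ∀ a ∈ A, ∀ b ∈ A, (2 : ℤ) • (a + b) ∈ bchPow 8 A := by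
  -- membership claim
  have hmem : ∀ a ∈ A, ∀ b ∈ A, (2 : ℤ) • (a + b) ∈ bchPow 8 A := by
    intro a ha b hb
    have : (2 : ℤ) • (a + b) =
        bchMul 0 (bchMul 0 (bchMul 0 (bchMul 0 (bchMul a (bchMul b (bchMul b (bchMul a 0))))))) := by
      rw [bch_zero_left, bch_zero_left, bch_zero_left, bch_zero_left]
      rw [show bchMul a (0 : L) = a by simp [bchMul], bch_key h2 a b]
    rw [this]
    simp only [bchPow]
    apply Finset.mem_image₂_of_mem hone
    apply Finset.mem_image₂_of_mem hone
    apply Finset.mem_image₂_of_mem hone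
    apply Finset.mem_image₂_of_mem hone
    apply Finset.mem_image₂_of_mem ha
    apply Finset.mem_image₂_of_mem hb
    apply Finset.mem_image₂_of_mem hb
    apply Finset.mem_image₂_of_mem ha
    exact Finset.mem_singleton_self 0
  refine ⟨?_, hmem⟩
  -- cardinality of bchPow
  have hcard : ∀ n : ℕ, (bchPow (n + 1) A).card ≤ k ^ n * A.card := by
    intro n
    induction n with
    | zero =>
      simp only [bchPow, pow_zero, one_mul]
      calc (Finset.image₂ bchMul A ({0} : Finset L)).card
          ≤ A.card * ({0} : Finset L).card := Finset.card_image₂_le _ _ _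
        _ = A.card := by simp
    | succ n ih =>
      have hsub : bchPow (n + 2) A ⊆
          Finset.univ.biUnion (fun i : Fin k => (bchPow (n + 1) A).image (bchMul (x i))) := by
        intro p hp
        simp only [bchPow, Finset.mem_image₂] at hp
        obtain ⟨a, ha, q, hq, rfl⟩ := hp
        obtain ⟨b, hb, r, hr, rfl⟩ := hq
        obtain ⟨i, c, hc, hic⟩ := hcov (bchMul a b) (Finset.mem_image₂_of_mem ha hb)
        refine Finset.mem_biUnion.2 ⟨i, Finset.mem_univ i, Finset.mem_image.2
          ⟨bchMul c r, Finset.mem_image₂_of_mem hc hr, ?_⟩⟩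
        rw [← bch_assoc h2, ← hic, bch_assoc h2]
      calc (bchPow (n + 2) A).card
          ≤ ∑ i : Fin k, ((bchPow (n + 1) A).image (bchMul (x i))).card :=
            (Finset.card_le_card hsub).trans (Finset.card_biUnion_le)
        _ ≤ ∑ _i : Fin k, k ^ n * A.card := by
            refine Finset.sum_le_sum fun i _ => ?_
            exact (Finset.card_image_le).trans ih
        _ = k ^ (n + 1) * A.card := by
            rw [Finset.sum_const, Finset.card_univ, Fintype.card_fin, smul_eq_mul]
            ring
  -- |A+A| ≤ |A^8|
  have hsub2 : Finset.image₂ (· + ·) A A ⊆ (bchPow 8 A).image (fun p => (2⁻¹ : ℚ) • p) := by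
    intro s hs
    obtain ⟨a, ha, b, hb, rfl⟩ := Finset.mem_image₂.1 hs
    refine Finset.mem_image.2 ⟨(2 : ℤ) • (a + b), hmem a ha b hb, ?_⟩
    rw [← Int.cast_smul_eq_zsmul ℚ, smul_smul]
    norm_num
  calc (Finset.image₂ (· + ·) A A).card
      ≤ ((bchPow 8 A).image (fun p => (2⁻¹ : ℚ) • p)).card := Finset.card_le_card hsub2
    _ ≤ (bchPow 8 A).card := Finset.card_image_le
    _ ≤ k ^ 7 * A.card := hcard 7
end

section
/- Let G be a group, A ⊆ G finite symmetric with 1 ∈ A and AA ⊆ ⋃_{i=1}^k x_i A. Then for any integers k_1, ..., k_l (possibly negative), the product set A^{k_1} A^{k_2} ⋯ A^{k_l} satisfies |A^{k_1} ⋯ A^{k_l}| ≤ k^{(|k_1|+⋯+|k_l|)-1} |A|, where A^{-m} := (A⁻¹)^m = A^m by symmetry. -/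
open scoped Pointwise

theorem pow_card_le (G : Type*) [Group G] [DecidableEq G] (A : Finset G) (K : ℕ)
    (x : Fin K → G) (hcov : (A * A : Finset G) ⊆ Finset.univ.biUnion fun i => x i • A) :
    ∀ n : ℕ, (A ^ (n + 1)).card ≤ K ^ n * A.card := by
  intro n
  induction n with
  | zero => simp
  | succ m ih =>
    have hsub : A ^ (m + 2) ⊆ Finset.univ.biUnion fun i => x i • A ^ (m + 1) := by
      intro g hg
      rw [show m + 2 = 1 + 1 + m by omega, pow_add, pow_add, pow_one] at hg
      obtain ⟨a, ha, b, hb, rfl⟩ := Finset.mem_mul.1 hg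
      obtain ⟨i, _, hi⟩ := Finset.mem_biUnion.1 (hcov ha)
      obtain ⟨c, hc, rfl⟩ := Finset.mem_smul_finset.1 hi
      refine Finset.mem_biUnion.2 ⟨i, Finset.mem_univ i, ?_⟩
      rw [smul_eq_mul, mul_assoc]
      exact Finset.mem_smul_finset.2 ⟨c * b, by rw [pow_succ']; exact Finset.mul_mem_mul hc hb, rfl⟩
    calc (A ^ (m + 2)).card ≤ ∑ i : Fin K, (x i • A ^ (m + 1)).card :=
          le_trans (Finset.card_le_card hsub) (Finset.card_biUnion_le)
      _ = K * (A ^ (m + 1)).card := by simp [Finset.card_smul_finset, mul_comm]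
      _ ≤ K * (K ^ m * A.card) := by exact Nat.mul_le_mul_left K ih
      _ = K ^ (m + 1) * A.card := by ring

/-- Let `G` be a group, `A ⊆ G` finite symmetric with `1 ∈ A` and
`AA ⊆ ⋃_{i=1}^K xᵢA`. Then for any integers `k₁, …, k_l` (possibly negative), the product set
`A^{k₁} A^{k₂} ⋯ A^{k_l}` satisfies `|A^{k₁} ⋯ A^{k_l}| ≤ K^{(|k₁|+⋯+|k_l|)-1} |A|`, where
`A^{-m} := (A⁻¹)^m = A^m` by symmetry (so `A^{kᵢ} = A^{|kᵢ|}`) and `A^0 = {1}`. -/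
theorem stmt11 (G : Type*) [Group G] [DecidableEq G] (A : Finset G) (K : ℕ)
    (hsym : ∀ a ∈ A, a⁻¹ ∈ A) (hone : (1 : G) ∈ A)
    (x : Fin K → G) (hcov : (A * A : Finset G) ⊆ Finset.univ.biUnion fun i => x i • A)
    (l : ℕ) (k : Fin l → ℤ) :
    ((List.ofFn fun i : Fin l => A ^ (k i).natAbs).prod : Finset G).card ≤
      K ^ ((∑ i : Fin l, (k i).natAbs) - 1) * A.card := by
  have hprod : (List.ofFn fun i : Fin l => A ^ (k i).natAbs).prod
      = A ^ (∑ i : Fin l, (k i).natAbs) := by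
    have hmap : (List.ofFn fun i : Fin l => A ^ (k i).natAbs)
        = (List.ofFn fun i : Fin l => (k i).natAbs).map (fun n => A ^ n) := by
      rw [List.map_ofFn]; rfl
    have hl : ∀ ns : List ℕ, (ns.map fun n => A ^ n).prod = A ^ ns.sum := by
      intro ns
      induction ns with
      | nil => simp
      | cons a t ih => simp [ih, pow_add]
    rw [hmap, hl, List.sum_ofFn]
  rw [hprod]
  rcases Nat.eq_zero_or_pos (∑ i : Fin l, (k i).natAbs) with h | h
  · rw [h]
    simpa using Finset.card_pos.2 ⟨1, hone⟩
  · obtain ⟨m, hm⟩ := Nat.exists_eq_add_of_lt h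
    rw [hm]
    simpa [Nat.add_comm] using pow_card_le G A K x hcov m
end
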